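/- The subspace 𝔥⁰ = ℚ + x·ℚ⟨x,y⟩·y is closed under the harmonic product ∗, i.e., it is a subalgebra of (𝔥¹, ∗). -/

import Mathlib

/- The harmonic product on 𝔥¹ = ℚ + ℚ⟨x,y⟩y, identified with the free
noncommutative algebra on the generators z_k (k ≥ 1), i.e. the monoid algebra
of the free monoid on ℕ+, is commutative. -/

noncomputable section

/-- 𝔥¹, the monoid algebra ℚ⟨z₁, z₂, …⟩ on the free monoid on ℕ+. -/
abbrev Hone : Type := MonoidAlgebra ℚ (FreeMonoid ℕ+)

/-- The harmonic product of two words, defined inductively. -/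
def hword : List ℕ+ → List ℕ+ → Hone
  | [], L => MonoidAlgebra.single (FreeMonoid.ofList L) 1
  | K, [] => MonoidAlgebra.single (FreeMonoid.ofList K) 1
  | k :: K, l :: L =>
      MonoidAlgebra.single (FreeMonoid.of k) 1 * hword K (l :: L)
      + MonoidAlgebra.single (FreeMonoid.of l) 1 * hword (k :: K) L
      + MonoidAlgebra.single (FreeMonoid.of (k + l)) 1 * hword K L
termination_by K L => K.length + L.length

/-- The harmonic product, extended ℚ-bilinearly to all of 𝔥¹. -/
def hstar (a b : Hone) : Hone :=
  a.coeff.sum fun w c => b.coeff.sum fun w' c' => (c * c') • hword (FreeMonoid.toList w) (FreeMonoid.toList w')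

/-- A word lies in 𝔥⁰ iff it is empty or its first letter z_k has k ≥ 2
(i.e. the corresponding monomial x^{k-1}y⋯ begins with x). -/
def AdmissibleWord (K : List ℕ+) : Prop := ∀ k K', K = k :: K' → 2 ≤ (k : ℕ)

/-- 𝔥⁰ = ℚ + x𝔥y, the span of 1 and the admissible words. -/
def Hzero : Submodule ℚ Hone :=
  Submodule.span ℚ {a : Hone | ∃ K : List ℕ+, AdmissibleWord K ∧
    a = MonoidAlgebra.single (FreeMonoid.ofList K) 1}

lemma single_mem_Hzero {K : List ℕ+} (h : AdmissibleWord K) :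
    MonoidAlgebra.single (FreeMonoid.ofList K) (1 : ℚ) ∈ Hzero :=
  Submodule.subset_span ⟨K, h, rfl⟩

lemma mul_single_mem_Hzero (m : ℕ+) (hm : 2 ≤ (m : ℕ)) (a : Hone) :
    MonoidAlgebra.single (FreeMonoid.of m) (1 : ℚ) * a ∈ Hzero := by
  induction a using MonoidAlgebra.induction with
  | zero => simp only [mul_zero]; exact Hzero.zero_mem
  | single_add w c f _ _ ih =>
    rw [mul_add]
    refine Hzero.add_mem ?_ ih
    have : MonoidAlgebra.single (FreeMonoid.of m) (1:ℚ) * MonoidAlgebra.single w c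
        = c • MonoidAlgebra.single (FreeMonoid.ofList (m :: FreeMonoid.toList w)) (1:ℚ) := by
      rw [MonoidAlgebra.single_mul_single, one_mul, MonoidAlgebra.smul_single, smul_eq_mul, mul_one]
      rfl
    rw [this]
    exact Hzero.smul_mem c (single_mem_Hzero (fun k K' hk => by
      injection hk with h1 _; rw [← h1]; exact hm))

lemma hword_mem_Hzero : ∀ (K L : List ℕ+), AdmissibleWord K → AdmissibleWord L →
    hword K L ∈ Hzero
  | [], L, _, hL => by rw [hword]; exact single_mem_Hzero hL
  | k :: K, [], hK, _ => by rw [hword]; exact single_mem_Hzero hK; simp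
  | k :: K, l :: L, hK, hL => by
    rw [hword]
    have hk : 2 ≤ (k : ℕ) := hK k K rfl
    have hl : 2 ≤ (l : ℕ) := hL l L rfl
    refine Hzero.add_mem (Hzero.add_mem ?_ ?_) ?_
    · exact mul_single_mem_Hzero k hk _
    · exact mul_single_mem_Hzero l hl _
    · refine mul_single_mem_Hzero (k + l) ?_ _
      calc (2:ℕ) ≤ (k:ℕ) := hk
        _ ≤ (k:ℕ) + l := Nat.le_add_right _ _
        _ = ((k+l : ℕ+) : ℕ) := rfl

lemma hstar_single_single (K L : List ℕ+) :
    hstar (MonoidAlgebra.single (FreeMonoid.ofList K) 1)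
      (MonoidAlgebra.single (FreeMonoid.ofList L) 1) = hword K L := by
  rw [hstar, MonoidAlgebra.coeff_single, MonoidAlgebra.coeff_single, Finsupp.sum_single_index, Finsupp.sum_single_index]
  · simp [FreeMonoid.toList_ofList]
  · simp
  · simp [Finsupp.sum_single_index]

lemma hstar_add_left (a a' b : Hone) : hstar (a + a') b = hstar a b + hstar a' b := by
  rw [hstar, hstar, hstar, MonoidAlgebra.coeff_add, Finsupp.sum_add_index'] <;> intros <;>
    simp [add_mul, add_smul, Finsupp.sum_add]

lemma hstar_smul_left (c : ℚ) (a b : Hone) : hstar (c • a) b = c • hstar a b := by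
  rw [hstar, hstar, MonoidAlgebra.coeff_smul, Finsupp.sum_smul_index, Finsupp.smul_sum]
  · refine Finsupp.sum_congr fun w _ => ?_
    rw [Finsupp.smul_sum]
    refine Finsupp.sum_congr fun w' _ => ?_
    rw [mul_assoc, mul_smul]
  · intro w; simp

lemma hstar_add_right (a b b' : Hone) : hstar a (b + b') = hstar a b + hstar a b' := by
  rw [hstar, hstar, hstar, ← Finsupp.sum_add]
  refine Finsupp.sum_congr fun w c => ?_
  rw [MonoidAlgebra.coeff_add, Finsupp.sum_add_index'] <;> intros <;> simp [mul_add, add_smul]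

lemma hstar_smul_right (c : ℚ) (a b : Hone) : hstar a (c • b) = c • hstar a b := by
  rw [hstar, hstar, Finsupp.smul_sum]
  refine Finsupp.sum_congr fun w cw => ?_
  rw [MonoidAlgebra.coeff_smul, Finsupp.sum_smul_index, Finsupp.smul_sum]
  · refine Finsupp.sum_congr fun w' _ => ?_
    rw [smul_smul]; congr 1; ring
  · intro w'; simp

lemma hstar_zero_left (b : Hone) : hstar 0 b = 0 := by simp [hstar]

lemma hstar_zero_right (a : Hone) : hstar a 0 = 0 := by simp [hstar]

/-- 𝔥⁰ is closed under the harmonic product, i.e. is a subalgebra of (𝔥¹, ∗). -/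
theorem Hzero_closed_hstar (a b : Hone) (ha : a ∈ Hzero) (hb : b ∈ Hzero) :
    hstar a b ∈ Hzero := by
  induction ha using Submodule.span_induction with
  | mem x hx =>
    obtain ⟨K, hK, rfl⟩ := hx
    induction hb using Submodule.span_induction with
    | mem y hy =>
      obtain ⟨L, hL, rfl⟩ := hy
      rw [hstar_single_single]
      exact hword_mem_Hzero K L hK hL
    | zero => rw [hstar_zero_right]; exact Hzero.zero_mem
    | add y z _ _ h1 h2 => rw [hstar_add_right]; exact Hzero.add_mem h1 h2
    | smul c y _ h => rw [hstar_smul_right]; exact Hzero.smul_mem c h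
  | zero => rw [hstar_zero_left]; exact Hzero.zero_mem
  | add x y _ _ h1 h2 => rw [hstar_add_left]; exact Hzero.add_mem h1 h2
  | smul c x _ h => rw [hstar_smul_left]; exact Hzero.smul_mem c h

end
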